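/- Let γ > 0 and δ > 0, and set S = 3 + 2δ + γ(2+δ), R = √((3 + 2γ + 2δ + δγ)/(2γ)), E = γ(1+δ)/S, and Ψ(u) = (1 + γu)/(γ(2+δ)) + γu²/(2S). Then for every u > 0, (u²/(4R²) − 1)·Ψ″(u) + (δu/(4R²) − 1/(γu))·Ψ′(u) + Ψ(u)/u = E·Ψ(u). -/

import Mathlib

/-- Physical n = 2 solution for two Coulombically repelling electrons on a
sphere: energy `E = γ(1+δ)/S` with `S = 3 + 2δ + γ(2+δ)`, under the radius
constraint `R² = (3 + 2γ + 2δ + δγ)/(2γ)`. -/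
theorem electrons_on_sphere_n2 (γ δ : ℝ) (hγ : 0 < γ) (hδ : 0 < δ)
    (S R E : ℝ) (hS : S = 3 + 2 * δ + γ * (2 + δ))
    (hR : R = Real.sqrt ((3 + 2 * γ + 2 * δ + δ * γ) / (2 * γ)))
    (hE : E = γ * (1 + δ) / S)
    (Ψ : ℝ → ℝ)
    (hΨ : Ψ = fun u : ℝ => (1 + γ * u) / (γ * (2 + δ)) + γ * u ^ 2 / (2 * S))
    (u : ℝ) (hu : 0 < u) :
    (u ^ 2 / (4 * R ^ 2) - 1) * deriv (deriv Ψ) u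
      + (δ * u / (4 * R ^ 2) - 1 / (γ * u)) * deriv Ψ u
      + Ψ u / u
    = E * Ψ u := by
  have hSpos : 0 < S := by rw [hS]; nlinarith
  have hS0 : S ≠ 0 := ne_of_gt hSpos
  have hγ0 : γ ≠ 0 := ne_of_gt hγ
  have h2δ : (2 : ℝ) + δ ≠ 0 := by positivity
  have hu0 : u ≠ 0 := ne_of_gt hu
  have hnum : 0 < 3 + 2 * γ + 2 * δ + δ * γ := by nlinarith
  have hR2 : R ^ 2 = (3 + 2 * γ + 2 * δ + δ * γ) / (2 * γ) := by
    rw [hR, Real.sq_sqrt (by positivity)]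
  have hΨ2 : Ψ = fun x : ℝ => 1 / (γ * (2 + δ)) + (1 / (2 + δ)) * x
      + (γ / (2 * S)) * x ^ 2 := by
    rw [hΨ]; funext x; field_simp
  have h1 : ∀ x : ℝ, HasDerivAt (fun x : ℝ => 1 / (γ * (2 + δ)) + (1 / (2 + δ)) * x
      + (γ / (2 * S)) * x ^ 2) (1 / (2 + δ) + (γ / (2 * S)) * (2 * x)) x := by
    intro x
    have := ((hasDerivAt_const x (1 / (γ * (2 + δ)))).add
      ((hasDerivAt_id x).const_mul (1 / (2 + δ)))).add
      ((hasDerivAt_pow 2 x).const_mul (γ / (2 * S)))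
    simpa [mul_comm, Pi.add_def] using this
  have hd1 : deriv Ψ = fun x : ℝ => 1 / (2 + δ) + (γ / (2 * S)) * (2 * x) := by
    funext x; rw [hΨ2]; exact (h1 x).deriv
  have h2 : ∀ x : ℝ, HasDerivAt (fun x : ℝ => 1 / (2 + δ) + (γ / (2 * S)) * (2 * x))
      (γ / (2 * S) * 2) x := by
    intro x
    have := (hasDerivAt_const x (1 / (2 + δ))).add
      (((hasDerivAt_id x).const_mul 2).const_mul (γ / (2 * S)))
    simpa [mul_comm, Pi.add_def] using this
  have hd2 : deriv (deriv Ψ) u = γ / (2 * S) * 2 := by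
    rw [hd1]; exact (h2 u).deriv
  rw [hd2, hd1, hΨ, hE, hR2, hS]
  have h2γ : (2 : ℝ) * γ ≠ 0 := by positivity
  field_simp
  ring
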